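/- Let n ≥ 1, ζ ∈ 𝕊ⁿ, x ∈ 𝕊ⁿ, and δ > 0. If there exists a point w ∈ B_ζ(δ) ∩ Γ(x), then B_ζ(δ) ⊂ B_x(16δ); that is, every z ∈ 𝔹ⁿ with |1 − ⟨z,ζ⟩| < δ satisfies |1 − ⟨z,x⟩| < 16δ. -/

import Mathlib

/-!
Formalization of statements about the Volterra-type integral operator `J_b`
on Hardy spaces `H^p` of the unit ball of `ℂⁿ`.
-/

open MeasureTheory Metric Set Filter
open scoped ENNReal Topology NNReal ComplexConjugate

noncomputable section

/-- ℂⁿ with the Euclidean norm. -/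
abbrev En (n : ℕ) := EuclideanSpace ℂ (Fin n)

instance (n : ℕ) : MeasurableSpace (En n) := borel _
instance (n : ℕ) : BorelSpace (En n) := ⟨rfl⟩

/-- The open unit ball 𝔹ⁿ ⊂ ℂⁿ. -/
def ballB (n : ℕ) : Set (En n) := Metric.ball 0 1

/-- The unit sphere 𝕊ⁿ = ∂𝔹ⁿ. -/
def sphereS (n : ℕ) : Set (En n) := Metric.sphere 0 1

/-- The Hermitian pairing ⟨z,w⟩ = z₁w̄₁ + ⋯ + zₙw̄ₙ. -/
def hpair {n : ℕ} (z w : En n) : ℂ := ∑ i, z i * conj (w i)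

/-- Lebesgue measure on ℂⁿ (transported from the product space `Fin n → ℂ`). -/
def volE (n : ℕ) : Measure (En n) :=
  Measure.map (EuclideanSpace.equiv (Fin n) ℂ).symm volume

/-- The normalized volume measure v on 𝔹ⁿ, with v(𝔹ⁿ) = 1. -/
def vMeas (n : ℕ) : Measure (En n) :=
  (volE n (ballB n))⁻¹ • (volE n).restrict (ballB n)

/-- The normalized surface measure σ on 𝕊ⁿ (viewed as a Borel measure on ℂⁿ
supported on the sphere), with σ(𝕊ⁿ) = 1. -/
def sigmaS (n : ℕ) : Measure (En n) :=
  ((volE n).toSphere Set.univ)⁻¹ •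
    Measure.map (Subtype.val : sphere (0 : En n) 1 → En n) ((volE n).toSphere)

/-- The radial derivative Rb(z) = Σ z_k ∂b/∂z_k(z), i.e. the Fréchet derivative
of `b` at `z` evaluated at `z`. -/
def Rad (n : ℕ) (b : En n → ℂ) (z : En n) : ℂ := fderiv ℂ b z z

/-- The Volterra-type operator J_b f(z) = ∫₀¹ f(tz) Rb(tz) dt/t. -/
def Jb (n : ℕ) (b f : En n → ℂ) (z : En n) : ℂ :=
  ∫ t in (0:ℝ)..1, f (t • z) * Rad n b (t • z) / (t : ℂ)

/-- The integral of ‖f(rζ)‖^p over the unit sphere. -/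
def sphereInt (n : ℕ) (p : ℝ) (f : En n → ℂ) (r : ℝ) : ℝ :=
  ∫ ζ in sphereS n, ‖f (r • ζ)‖ ^ p ∂ sigmaS n

/-- Membership in the Hardy space H^p: holomorphic on 𝔹ⁿ with bounded p-means. -/
def MemHp (n : ℕ) (p : ℝ) (f : En n → ℂ) : Prop :=
  DifferentiableOn ℂ f (ballB n) ∧ BddAbove (sphereInt n p f '' Ioo (0:ℝ) 1)

/-- The H^p norm: ‖f‖_{H^p} = (sup_{0<r<1} ∫_{𝕊ⁿ}|f(rζ)|^p dσ(ζ))^{1/p}. -/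
def HpNorm (n : ℕ) (p : ℝ) (f : En n → ℂ) : ℝ :=
  (sSup (sphereInt n p f '' Ioo (0:ℝ) 1)) ^ (1/p)

/-- The non-isotropic balls B_ζ(δ) = {z ∈ 𝔹ⁿ : |1 - ⟨z,ζ⟩| < δ}. -/
def CBall (n : ℕ) (ζ : En n) (δ : ℝ) : Set (En n) :=
  {z ∈ ballB n | ‖1 - hpair z ζ‖ < δ}

/-- The measure dμ_b = |Rb(z)|²(1-|z|²) dv(z) on 𝔹ⁿ. -/
def muB (n : ℕ) (b : En n → ℂ) : Measure (En n) :=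
  (vMeas n).withDensity fun z => ENNReal.ofReal (‖Rad n b z‖ ^ 2 * (1 - ‖z‖ ^ 2))

/-- μ is a Carleson measure: μ(B_ζ(δ)) ≤ C δⁿ for all ζ ∈ 𝕊ⁿ, δ > 0. -/
def IsCarleson (n : ℕ) (μ : Measure (En n)) : Prop :=
  ∃ C > 0, ∀ ζ ∈ sphereS n, ∀ δ > 0, μ (CBall n ζ δ) ≤ ENNReal.ofReal (C * δ ^ n)

/-- μ is a vanishing Carleson measure: sup_{ζ∈𝕊ⁿ} μ(B_ζ(δ))/δⁿ → 0 as δ → 0⁺. -/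
def IsVanishingCarleson (n : ℕ) (μ : Measure (En n)) : Prop :=
  Tendsto (fun δ : ℝ => ⨆ ζ ∈ sphereS n, μ (CBall n ζ δ) / ENNReal.ofReal (δ ^ n))
    (𝓝[>] 0) (𝓝 0)

/-- b ∈ BMOA(𝔹ⁿ): b is holomorphic on 𝔹ⁿ and μ_b is a Carleson measure. -/
def MemBMOA (n : ℕ) (b : En n → ℂ) : Prop :=
  DifferentiableOn ℂ b (ballB n) ∧ IsCarleson n (muB n b)

/-- b ∈ VMOA(𝔹ⁿ): b is holomorphic on 𝔹ⁿ and μ_b is a vanishing Carleson measure. -/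
def MemVMOA (n : ℕ) (b : En n → ℂ) : Prop :=
  DifferentiableOn ℂ b (ballB n) ∧ IsVanishingCarleson n (muB n b)

/-- The test functions f_a(z) = (1-|a|²)^{1/p} (1-⟨z,a⟩)^{-(n+1)/p}. -/
def testF (n : ℕ) (p : ℝ) (a z : En n) : ℂ :=
  ((((1:ℝ) - ‖a‖ ^ 2) ^ (1/p) : ℝ) : ℂ) * (1 - hpair z a) ^ (-(((n : ℂ) + 1) / (p : ℂ)))

/-- The non-isotropic metric ball S_ε(ω) = {ζ ∈ 𝕊ⁿ : |1-⟨ζ,ω⟩| < ε}. -/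
def SBall (n : ℕ) (ω : En n) (ε : ℝ) : Set (En n) :=
  {ζ ∈ sphereS n | ‖1 - hpair ζ ω‖ < ε}

/-- The admissible approach region Γ(ζ) = {z ∈ 𝔹ⁿ : |1-⟨z,ζ⟩| < 1-|z|²}. -/
def Gam (n : ℕ) (ζ : En n) : Set (En n) :=
  {z ∈ ballB n | ‖1 - hpair z ζ‖ < 1 - ‖z‖ ^ 2}

/-- The ℓ^p norm of a sequence of complex numbers. -/
def seqNorm (p : ℝ) (α : ℕ → ℂ) : ℝ := (∑' k, ‖α k‖ ^ p) ^ (1/p)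

/-- Convergence of the series Σ_k g_k to F in the H^p norm. -/
def HpSeriesTendsto (n : ℕ) (p : ℝ) (g : ℕ → En n → ℂ) (F : En n → ℂ) : Prop :=
  Tendsto (fun N => HpNorm n p (F - fun z => ∑ k ∈ Finset.range N, g k z)) atTop (𝓝 0)

lemma hpair_inner {n : ℕ} (z w : En n) : hpair z w = inner ℂ w z := by
  simp [hpair, PiLp.inner_apply, RCLike.inner_apply, mul_comm]

lemma norm_sub_smul_sq {n : ℕ} (z u : En n) (p : ℂ) (hp : p = inner ℂ u z) :
    ‖z - p • u‖^2 = ‖z‖^2 - 2*‖p‖^2 + ‖p‖^2 * ‖u‖^2 := by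
  have h := @norm_sub_sq ℂ _ _ _ _ z (p • u)
  have h2 : (inner ℂ z (p • u) : ℂ) = p * conj p := by
    rw [inner_smul_right, ← inner_conj_symm, ← hp]
  rw [h, h2, RCLike.mul_conj, norm_smul]
  simp [mul_pow, ← Complex.ofReal_pow]

set_option maxHeartbeats 1000000 in
lemma dtri {n : ℕ} (z u w : En n) (hz : ‖z‖ ≤ 1) (hu : ‖u‖ ≤ 1) (hw : ‖w‖ ≤ 1) :
    ‖1 - hpair z w‖ ≤
      (Real.sqrt ‖1 - hpair z u‖ + Real.sqrt ‖1 - hpair u w‖) ^ 2 := by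
  set p : ℂ := inner ℂ u z with hp
  set q : ℂ := inner ℂ u w with hq
  have hzu : hpair z u = p := hpair_inner z u
  have huw : hpair u w = conj q := by rw [hpair_inner, hq, ← inner_conj_symm]
  have hqn : ‖1 - hpair u w‖ = ‖1 - q‖ := by
    rw [huw, show (1:ℂ) - conj q = conj (1 - q) by simp, RCLike.norm_conj]
  rw [hpair_inner, hzu, hqn]
  set a := Real.sqrt ‖1 - p‖ with ha
  set b := Real.sqrt ‖1 - q‖ with hb
  have ha2 : a^2 = ‖1 - p‖ := Real.sq_sqrt (norm_nonneg _)
  have hb2 : b^2 = ‖1 - q‖ := Real.sq_sqrt (norm_nonneg _)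
  have hpn : ‖p‖ ≤ 1 := by
    have := norm_inner_le_norm (𝕜 := ℂ) u z
    rw [← hp] at this
    nlinarith [norm_nonneg u, norm_nonneg z]
  have hqn1 : ‖q‖ ≤ 1 := by
    have := norm_inner_le_norm (𝕜 := ℂ) u w
    rw [← hq] at this
    nlinarith [norm_nonneg u, norm_nonneg w]
  -- the key identity
  have hinner : (inner ℂ (w - q • u) (z - p • u) : ℂ)
      = inner ℂ w z - 2 * (p * conj q) + p * conj q * (‖u‖:ℂ)^2 := by
    have huu : (inner ℂ u u : ℂ) = (‖u‖:ℂ)^2 := by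
      rw [inner_self_eq_norm_sq_to_K]; norm_cast
    rw [inner_sub_left, inner_sub_right, inner_sub_right, inner_smul_left,
      inner_smul_right, inner_smul_left, inner_smul_right, huu,
      show (inner ℂ w u : ℂ) = conj q by rw [hq, ← inner_conj_symm], ← hp]
    ring
  have hid : (1 : ℂ) - inner ℂ w z = (1 - p * conj q)
      - ((inner ℂ (w - q • u) (z - p • u) : ℂ) + p * conj q * (1 - (‖u‖:ℂ)^2)) := by
    rw [hinner]; ring
  -- norm bounds
  have hX1 : ‖z - p • u‖^2 = ‖z‖^2 - 2*‖p‖^2 + ‖p‖^2 * ‖u‖^2 := norm_sub_smul_sq z u p hp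
  have hY1 : ‖w - q • u‖^2 = ‖w‖^2 - 2*‖q‖^2 + ‖q‖^2 * ‖u‖^2 := norm_sub_smul_sq w u q hq
  have hu2 : (0:ℝ) ≤ 1 - ‖u‖^2 := by nlinarith [norm_nonneg u]
  set s := Real.sqrt (1 - ‖u‖^2) with hs
  have hs2 : s^2 = 1 - ‖u‖^2 := Real.sq_sqrt hu2
  have hE : ‖(inner ℂ (w - q • u) (z - p • u) : ℂ) + p * conj q * (1 - (‖u‖:ℂ)^2)‖
      ≤ ‖w - q • u‖ * ‖z - p • u‖ + (‖q‖*s) * (‖p‖*s) := by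
    refine (norm_add_le _ _).trans ?_
    gcongr
    · exact norm_inner_le_norm _ _
    · rw [norm_mul, norm_mul, RCLike.norm_conj]
      have h3 : ‖(1:ℂ) - (‖u‖:ℂ)^2‖ = 1 - ‖u‖^2 := by
        rw [show (1:ℂ) - (‖u‖:ℂ)^2 = ((1 - ‖u‖^2 : ℝ) : ℂ) by push_cast; ring,
          Complex.norm_real, Real.norm_of_nonneg hu2]
      rw [h3]
      have h4 : (‖q‖*s) * (‖p‖*s) = ‖p‖*‖q‖*(1 - ‖u‖^2) := by
        rw [show (‖q‖*s) * (‖p‖*s) = ‖p‖*‖q‖*s^2 by ring, hs2]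
      linarith [h4.ge]
  -- Cauchy-Schwarz in ℝ²
  have hXsum : ‖z - p • u‖^2 + (‖p‖*s)^2 ≤ 1 - ‖p‖^2 := by
    rw [hX1, mul_pow, hs2]; nlinarith [norm_nonneg z, hz]
  have hYsum : ‖w - q • u‖^2 + (‖q‖*s)^2 ≤ 1 - ‖q‖^2 := by
    rw [hY1, mul_pow, hs2]; nlinarith [norm_nonneg w, hw]
  have h1p : 1 - ‖p‖^2 ≤ 2 * ‖1 - p‖ := by
    have h5 : (1:ℝ) - ‖p‖ ≤ ‖1 - p‖ := by
      have := norm_sub_norm_le (1:ℂ) p; simpa using this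
    nlinarith [norm_nonneg p]
  have h1q : 1 - ‖q‖^2 ≤ 2 * ‖1 - q‖ := by
    have h5 : (1:ℝ) - ‖q‖ ≤ ‖1 - q‖ := by
      have := norm_sub_norm_le (1:ℂ) q; simpa using this
    nlinarith [norm_nonneg q]
  have hEab : ‖(inner ℂ (w - q • u) (z - p • u) : ℂ) + p * conj q * (1 - (‖u‖:ℂ)^2)‖
      ≤ 2 * a * b := by
    refine hE.trans ?_
    have hcs : (‖w - q • u‖ * ‖z - p • u‖ + (‖q‖*s) * (‖p‖*s))^2
        ≤ (‖w - q • u‖^2 + (‖q‖*s)^2) * (‖z - p • u‖^2 + (‖p‖*s)^2) := by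
      nlinarith [sq_nonneg (‖w - q • u‖ * (‖p‖*s) - ‖z - p • u‖ * (‖q‖*s))]
    have h4 : (2*a*b)^2 = (2*‖1-q‖) * (2*‖1-p‖) := by
      rw [show (2*a*b)^2 = 4*(a^2)*(b^2) by ring, ha2, hb2]; ring
    have hsq : (‖w - q • u‖ * ‖z - p • u‖ + (‖q‖*s) * (‖p‖*s))^2 ≤ (2*a*b)^2 := by
      rw [h4]
      nlinarith [hcs, hXsum, hYsum, h1p, h1q, norm_nonneg (w - q•u), norm_nonneg (z - p•u),
        sq_nonneg (‖q‖*s), sq_nonneg (‖p‖*s), norm_nonneg ((1:ℂ)-p), norm_nonneg ((1:ℂ)-q),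
        sq_nonneg ‖p‖, sq_nonneg ‖q‖]
    have hnn : 0 ≤ ‖w - q • u‖ * ‖z - p • u‖ + (‖q‖*s) * (‖p‖*s) := by positivity
    have h2ab : 0 ≤ 2*a*b := by positivity
    nlinarith [hsq, hnn, h2ab]
  have hfirst : ‖(1:ℂ) - p * conj q‖ ≤ ‖1 - p‖ + ‖1 - q‖ := by
    have h6 : (1:ℂ) - p * conj q = (1 - p) + p * (1 - conj q) := by ring
    rw [h6]
    refine (norm_add_le _ _).trans ?_
    have h7 : ‖p * ((1:ℂ) - conj q)‖ ≤ ‖1 - q‖ := by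
      rw [norm_mul, show (1:ℂ) - conj q = conj (1 - q) by simp, RCLike.norm_conj]
      nlinarith [norm_nonneg ((1:ℂ) - q)]
    linarith
  calc ‖(1:ℂ) - inner ℂ w z‖
      = ‖(1 - p * conj q) - ((inner ℂ (w - q • u) (z - p • u) : ℂ) + p * conj q * (1 - (‖u‖:ℂ)^2))‖ := by rw [← hid]
    _ ≤ ‖(1:ℂ) - p * conj q‖ + ‖(inner ℂ (w - q • u) (z - p • u) : ℂ) + p * conj q * (1 - (‖u‖:ℂ)^2)‖ := norm_sub_le _ _
    _ ≤ (‖1 - p‖ + ‖1 - q‖) + 2*a*b := add_le_add hfirst hEab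
    _ = (a + b)^2 := by rw [← ha2, ← hb2]; ring

lemma hpair_comm {n : ℕ} (z w : En n) : hpair z w = conj (hpair w z) := by
  simp [hpair, map_sum, mul_comm]

/-- if B_ζ(δ) meets Γ(x) for some x ∈ 𝕊ⁿ, then B_ζ(δ) ⊂ B_x(16δ). -/
theorem stmt18 (n : ℕ) (hn : 1 ≤ n) (ζ x : En n) (hζ : ζ ∈ sphereS n)
    (hx : x ∈ sphereS n) (δ : ℝ) (hδ : 0 < δ) (w : En n)
    (hw : w ∈ CBall n ζ δ ∩ Gam n x) :
    CBall n ζ δ ⊆ CBall n x (16 * δ) := by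
  obtain ⟨⟨hwB, hwζ⟩, hwB', hwx⟩ := hw
  intro z hz
  obtain ⟨hzB, hzζ⟩ := hz
  have hzn : ‖z‖ < 1 := by simpa [ballB] using hzB
  have hwn : ‖w‖ < 1 := by simpa [ballB] using hwB
  have hζn : ‖ζ‖ = 1 := by simpa [sphereS] using hζ
  have hxn : ‖x‖ = 1 := by simpa [sphereS] using hx
  refine ⟨hzB, ?_⟩
  have hζw : ‖1 - hpair ζ w‖ < δ := by
    rw [hpair_comm, show (1:ℂ) - conj (hpair w ζ) = conj (1 - hpair w ζ) by simp,
      RCLike.norm_conj]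
    exact hwζ
  have hA : ‖1 - hpair z w‖ < 4 * δ := by
    have t1 := dtri z ζ w hzn.le hζn.le hwn.le
    have s1 : Real.sqrt ‖1 - hpair z ζ‖ + Real.sqrt ‖1 - hpair ζ w‖
        < 2 * Real.sqrt δ := by
      have i1 := Real.sqrt_lt_sqrt (norm_nonneg _) hzζ
      have i2 := Real.sqrt_lt_sqrt (norm_nonneg _) hζw
      linarith
    have s1' : (Real.sqrt ‖1 - hpair z ζ‖ + Real.sqrt ‖1 - hpair ζ w‖)^2
        < (2 * Real.sqrt δ)^2 := by
      apply pow_lt_pow_left₀ s1 (by positivity)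
      norm_num
    have h2 : (2 * Real.sqrt δ)^2 = 4 * δ := by
      rw [mul_pow, Real.sq_sqrt hδ.le]; ring
    linarith
  have hB : ‖1 - hpair w x‖ < 2 * δ := by
    have h1w : 1 - ‖w‖ ≤ ‖1 - hpair w ζ‖ := by
      have hle : ‖hpair w ζ‖ ≤ ‖w‖ := by
        rw [hpair_inner]
        calc ‖(inner ℂ ζ w : ℂ)‖ ≤ ‖ζ‖ * ‖w‖ := norm_inner_le_norm ζ w
          _ = ‖w‖ := by rw [hζn, one_mul]
      have h3 := norm_sub_norm_le (1:ℂ) (hpair w ζ)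
      simp only [norm_one] at h3
      linarith
    nlinarith [hwx, norm_nonneg w, hwζ, hwn]
  have t2 := dtri z w x hzn.le hwn.le hxn.le
  have s2 : Real.sqrt ‖1 - hpair z w‖ + Real.sqrt ‖1 - hpair w x‖
      < Real.sqrt (4*δ) + Real.sqrt (2*δ) := by
    have i1 := Real.sqrt_lt_sqrt (norm_nonneg _) hA
    have i2 := Real.sqrt_lt_sqrt (norm_nonneg _) hB
    linarith
  have hfin : (Real.sqrt ‖1 - hpair z w‖ + Real.sqrt ‖1 - hpair w x‖)^2
      < (Real.sqrt (4*δ) + Real.sqrt (2*δ))^2 := by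
    apply pow_lt_pow_left₀ s2 (by positivity)
    norm_num
  have hnum : (Real.sqrt (4*δ) + Real.sqrt (2*δ))^2 ≤ 16 * δ := by
    have h4 : Real.sqrt (4*δ)^2 = 4*δ := Real.sq_sqrt (by linarith)
    have h2 : Real.sqrt (2*δ)^2 = 2*δ := Real.sq_sqrt (by linarith)
    nlinarith [sq_nonneg (Real.sqrt (4*δ) - Real.sqrt (2*δ))]
  linarith
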